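/- (Goldberg's theorem for m_3, uniqueness part.) Let p, q be integers with q ≥ 1, 0 ≤ p < q and gcd(p,q) = 1. If X and Y are rotation sets for m_3, each equal to the union of two distinct periodic orbits of m_3, with ρ(X) = ρ(Y) = p/q (mod ℤ), #X = #Y = 2q, and s₁(X) = s₁(Y), then X = Y. -/

import Mathlib

open Set MeasureTheory ENNReal

noncomputable section

instance : Fact ((0:ℝ) < 1) := ⟨one_pos⟩

/-- The circle `ℝ/ℤ`. -/
abbrev Circle1 : Type := AddCircle (1 : ℝ)

/-- The multiplication-by-`d` map `m_d` on the circle. -/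
def md (d : ℕ) : Circle1 → Circle1 := fun t => d • t

/-- `G : ℝ → ℝ` (monotone, commuting with `x ↦ x + 1`) is a lift of the circle map `g`. -/
def IsLift (g : Circle1 → Circle1) (G : CircleDeg1Lift) : Prop :=
  ∀ x : ℝ, g ((x : ℝ) : Circle1) = ((G x : ℝ) : Circle1)

/-- `g` is a monotone degree-one circle map. -/
def IsMonotoneDeg1 (g : Circle1 → Circle1) : Prop :=
  ∃ G : CircleDeg1Lift, IsLift g G

/-- `ρ` is the rotation number of the monotone degree-one circle map `g`:
the residue class mod `ℤ` of the translation number of a lift of `g`. -/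
def HasRotationNumber (g : Circle1 → Circle1) (ρ : Circle1) : Prop :=
  ∃ G : CircleDeg1Lift, IsLift g G ∧ ρ = ((G.translationNumber : ℝ) : Circle1)

/-- `X` is a rotation set for `m_d`. -/
def IsRotationSet (d : ℕ) (X : Set Circle1) : Prop :=
  X.Nonempty ∧ IsCompact X ∧ md d '' X = X ∧
    ∃ g : Circle1 → Circle1, IsMonotoneDeg1 g ∧ ∀ t ∈ X, g t = md d t

/-- `X` is a rotation set for `m_d` with rotation number `ρ`. -/
def IsRotationSetWith (d : ℕ) (X : Set Circle1) (ρ : Circle1) : Prop :=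
  X.Nonempty ∧ IsCompact X ∧ md d '' X = X ∧
    ∃ g : Circle1 → Circle1, (∀ t ∈ X, g t = md d t) ∧ HasRotationNumber g ρ

/-- A gap of `X` is a connected component of the complement of `X`. -/
def IsGap (X : Set Circle1) (I : Set Circle1) : Prop :=
  ∃ t ∈ Xᶜ, I = connectedComponentIn Xᶜ t

/-- `C` is a periodic orbit (cycle) of `m_d`. -/
def IsPeriodicOrbit (d : ℕ) (C : Set Circle1) : Prop :=
  ∃ (t : Circle1) (n : ℕ), 0 < n ∧ (md d)^[n] t = t ∧
    C = Set.range (fun k : Fin n => (md d)^[(k : ℕ)] t)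

/-- The number of points of `X` whose representative in `[0,1)` lies in `[0,1/2)`. -/
def s1 (X : Set Circle1) : ℕ :=
  {t ∈ X | ((AddCircle.equivIco 1 0 t : ℝ) < 1 / 2)}.ncard


-- helpers
lemma coe_int_zero (k : ℤ) : (((k:ℝ)) : Circle1) = 0 := by
  rw [AddCircle.coe_eq_zero_iff]; exact ⟨k, by simp⟩

lemma coe_fract (u : ℝ) : ((Int.fract u : ℝ) : Circle1) = ((u:ℝ):Circle1) := by
  have h : Int.fract u = u + (-⌊u⌋ : ℤ) := by rw [Int.fract]; push_cast; ring
  rw [h, AddCircle.coe_add, coe_int_zero, add_zero]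

lemma fract_eq_of_coe_eq {u v : ℝ} (h : ((u:ℝ):Circle1) = v) : Int.fract u = Int.fract v := by
  have h1 := congrArg (fun t => ((AddCircle.equivIco 1 0 t : ℝ))) h
  simpa [AddCircle.coe_equivIco_mk_apply] using h1

lemma equivIco_coe (u : ℝ) : ((AddCircle.equivIco 1 0 ((u:ℝ):Circle1)) : ℝ) = Int.fract u := by
  have := AddCircle.coe_equivIco_mk_apply (p := (1:ℝ)) u
  simpa using this

lemma stage1 (p q : ℕ) (hq : 1 ≤ q) (hpq : p < q) (X : Set Circle1)
    (hX : IsRotationSetWith 3 X ((((p:ℝ)/(q:ℝ)):ℝ) : Circle1)) (hcard : X.ncard = 2*q) :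
    ∃ x : ℕ → ℝ,
      (∀ i j, i < j → j < 2*q → x i < x j) ∧
      (∀ i, i < 2*q → x i ∈ Set.Ico (0:ℝ) 1) ∧
      (X = {t : Circle1 | ∃ i, i < 2*q ∧ t = ((x i : ℝ) : Circle1)}) ∧
      (∀ i, i < 2*q → 3 * x i = (⌊3 * x i⌋ : ℝ) + x ((i + 2*p) % (2*q))) := by
  obtain ⟨hne, hcomp, him, g, hg, G, hlift, hτ⟩ := hX
  set n := 2*q with hndef
  have hn0 : 0 < n := by omega
  have hfin : X.Finite := by
    by_contra h
    rw [Set.Infinite.ncard h] at hcard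
    omega
  -- the embedding into [0,1)
  set emb : Circle1 → ℝ := fun t => ((AddCircle.equivIco 1 0 t : ℝ)) with hembdef
  have hembinj : Function.Injective emb := fun a b hab =>
    (AddCircle.equivIco 1 0).injective (Subtype.coe_injective hab)
  have hembIco : ∀ t : Circle1, emb t ∈ Set.Ico (0:ℝ) 1 := fun t => by
    have := (AddCircle.equivIco 1 0 t).2
    simpa using this
  have hembcoe : ∀ t : Circle1, ((emb t : ℝ) : Circle1) = t := fun t =>
    (AddCircle.equivIco 1 0).symm_apply_apply t
  set R : Finset ℝ := hfin.toFinset.image emb with hRdef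
  have hRcard : R.card = n := by
    rw [hRdef, Finset.card_image_of_injective _ hembinj, ← Set.ncard_eq_toFinset_card X hfin]
    exact hcard
  set iso := R.orderIsoOfFin hRcard with hisodef
  set x : ℕ → ℝ := fun i => if h : i < n then (iso ⟨i, h⟩ : ℝ) else 0 with hxdef
  have hxval : ∀ i (h : i < n), x i = (iso ⟨i, h⟩ : ℝ) := fun i h => by
    rw [hxdef]; simp [h]
  have hxmemR : ∀ i, i < n → x i ∈ R := fun i h => by
    rw [hxval i h]; exact (iso ⟨i, h⟩).2
  have hmono : ∀ i j, i < j → j < n → x i < x j := by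
    intro i j hij hj
    have hi : i < n := lt_trans hij hj
    rw [hxval i hi, hxval j hj]
    have : iso ⟨i, hi⟩ < iso ⟨j, hj⟩ := by
      apply iso.strictMono
      exact hij
    exact this
  have hxinj : ∀ i j, i < n → j < n → x i = x j → i = j := by
    intro i j hi hj hxy
    rcases lt_trichotomy i j with h | h | h
    · exact absurd hxy (ne_of_lt (hmono i j h hj))
    · exact h
    · exact absurd hxy.symm (ne_of_lt (hmono j i h hi))
  have hRIco : ∀ r ∈ R, r ∈ Set.Ico (0:ℝ) 1 := by
    intro r hr
    rw [hRdef, Finset.mem_image] at hr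
    obtain ⟨t, _, rfl⟩ := hr
    exact hembIco t
  have hrange : ∀ i, i < n → x i ∈ Set.Ico (0:ℝ) 1 := fun i h => hRIco _ (hxmemR i h)
  have hfract : ∀ i, i < n → Int.fract (x i) = x i := fun i h =>
    Int.fract_eq_self.mpr ⟨(hrange i h).1, (hrange i h).2⟩
  have hRX : ∀ r ∈ R, ((r : ℝ) : Circle1) ∈ X := by
    intro r hr
    rw [hRdef, Finset.mem_image] at hr
    obtain ⟨t, ht, rfl⟩ := hr
    rw [hembcoe t]
    exact hfin.mem_toFinset.mp ht
  have hXR : ∀ t ∈ X, emb t ∈ R := by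
    intro t ht
    rw [hRdef, Finset.mem_image]
    exact ⟨t, hfin.mem_toFinset.mpr ht, rfl⟩
  have hRx : ∀ r ∈ R, ∃ i, i < n ∧ x i = r := by
    intro r hr
    obtain ⟨i, hi⟩ := iso.surjective ⟨r, hr⟩
    exact ⟨i.1, i.2, by rw [hxval i.1 i.2]; rw [hi]⟩
  have hXrepr : X = {t : Circle1 | ∃ i, i < n ∧ t = ((x i : ℝ) : Circle1)} := by
    ext t
    constructor
    · intro ht
      obtain ⟨i, hi, hxi⟩ := hRx (emb t) (hXR t ht)
      exact ⟨i, hi, by rw [hxi, hembcoe t]⟩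
    · rintro ⟨i, hi, rfl⟩
      exact hRX _ (hxmemR i hi)
  -- m3 is a bijection on X
  have hinj : Set.InjOn (md 3) X := by
    have hm : Set.MapsTo (md 3) X X := fun t ht => by rw [← him]; exact Set.mem_image_of_mem _ ht
    have hs : Set.SurjOn (md 3) X X := fun t ht => by rw [him]; exact ht
    exact ((hfin.surjOn_iff_bijOn_of_mapsTo hm).mp hs).injOn
  -- basic coercion for md 3
  have hmd3 : ∀ u : ℝ, md 3 ((u:ℝ):Circle1) = ((3*u : ℝ) : Circle1) := by
    intro u
    show (3:ℕ) • ((u:ℝ):Circle1) = _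
    rw [← AddCircle.coe_nsmul]
    norm_num
  -- key: fract (3 x i) lands in x-range, via an index function
  have hkey1 : ∀ i, i < n → ∃ j, j < n ∧ x j = Int.fract (3 * x i) := by
    intro i hi
    have ht : ((x i : ℝ) : Circle1) ∈ X := hRX _ (hxmemR i hi)
    have ht3 : md 3 ((x i : ℝ) : Circle1) ∈ X := by
      rw [← him]; exact Set.mem_image_of_mem _ ht
    have := hXR _ ht3
    rw [hmd3] at this
    have hembv : emb ((3 * x i : ℝ) : Circle1) = Int.fract (3 * x i) := equivIco_coe _
    rw [hembv] at this
    exact hRx _ this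
  -- key2 : fract (G (x i)) = fract (3 x i)
  have hkey2 : ∀ i, i < n → Int.fract (G (x i)) = Int.fract (3 * x i) := by
    intro i hi
    have ht : ((x i : ℝ) : Circle1) ∈ X := hRX _ (hxmemR i hi)
    have h1 : ((G (x i) : ℝ) : Circle1) = ((3 * x i : ℝ) : Circle1) := by
      rw [← hlift (x i), hg _ ht, hmd3]
    exact fract_eq_of_coe_eq h1
  -- injectivity of i ↦ fract (3 x i)
  have hfractinj : ∀ i j, i < n → j < n →
      Int.fract (3 * x i) = Int.fract (3 * x j) → i = j := by
    intro i j hi hj hf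
    have h1 : ((3 * x i : ℝ) : Circle1) = ((3 * x j : ℝ) : Circle1) := by
      rw [← coe_fract (3 * x i), ← coe_fract (3 * x j), hf]
    rw [← hmd3, ← hmd3] at h1
    have h2 := hinj (hRX _ (hxmemR i hi)) (hRX _ (hxmemR j hj)) h1
    have h3 : x i = x j := by
      have := congrArg emb h2
      have e1 : emb ((x i : ℝ) : Circle1) = Int.fract (x i) := equivIco_coe (x i)
      have e2 : emb ((x j : ℝ) : Circle1) = Int.fract (x j) := equivIco_coe (x j)
      rwa [e1, e2, hfract i hi, hfract j hj] at this
    exact hxinj i j hi hj h3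

  -- ℤ-indexed lift of the enumeration
  set y : ℤ → ℝ := fun j => x ((j % (n:ℤ)).toNat) + ((j / (n:ℤ) : ℤ) : ℝ) with hydef
  have hnz : (n:ℤ) ≠ 0 := by exact_mod_cast hn0.ne'
  have hnz' : (0:ℤ) < n := by exact_mod_cast hn0
  have hres : ∀ j : ℤ, ((j % (n:ℤ)).toNat < n) := by
    intro j
    have h1 : 0 ≤ j % (n:ℤ) := Int.emod_nonneg j hnz
    have h2 : j % (n:ℤ) < n := Int.emod_lt_of_pos j hnz'
    omega
  have hyval : ∀ j : ℤ, y j = x ((j % (n:ℤ)).toNat) + ((j / (n:ℤ) : ℤ) : ℝ) := fun j => rfl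
  have hynat : ∀ i : ℕ, i < n → y i = x i := by
    intro i hi
    rw [hyval]
    have h1 : ((i:ℤ) % (n:ℤ)) = i := Int.emod_eq_of_lt (by positivity) (by exact_mod_cast hi)
    have h2 : ((i:ℤ) / (n:ℤ)) = 0 := Int.ediv_eq_zero_of_lt (by positivity) (by exact_mod_cast hi)
    rw [h1, h2]
    simp
  have hylb : ∀ j : ℤ, ((j / (n:ℤ) : ℤ) : ℝ) ≤ y j := by
    intro j
    have := (hrange _ (hres j)).1
    rw [hyval]; linarith
  have hyub : ∀ j : ℤ, y j < ((j / (n:ℤ) : ℤ) : ℝ) + 1 := by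
    intro j
    have := (hrange _ (hres j)).2
    rw [hyval]; linarith
  have hymono : ∀ j j' : ℤ, j < j' → y j < y j' := by
    intro j j' h
    have hdle : j / (n:ℤ) ≤ j' / n := Int.ediv_le_ediv hnz' (le_of_lt h)
    rcases eq_or_lt_of_le hdle with hde | hdl
    · have e1 : (n:ℤ) * (j / n) + j % n = j := Int.mul_ediv_add_emod j n
      have e2 : (n:ℤ) * (j' / n) + j' % n = j' := Int.mul_ediv_add_emod j' n
      rw [← hde] at e2
      have hr : (j % (n:ℤ)).toNat < (j' % (n:ℤ)).toNat := by
        have h1 : 0 ≤ j % (n:ℤ) := Int.emod_nonneg j hnz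
        have h2 : 0 ≤ j' % (n:ℤ) := Int.emod_nonneg j' hnz
        omega
      have h3 := hmono _ _ hr (hres j')
      rw [hyval, hyval, ← hde]
      linarith
    · have h1 : ((j / (n:ℤ) : ℤ) : ℝ) + 1 ≤ ((j' / (n:ℤ) : ℤ) : ℝ) := by
        have h2 : j / (n:ℤ) + 1 ≤ j' / n := hdl
        exact_mod_cast h2
      calc y j < ((j / (n:ℤ) : ℤ) : ℝ) + 1 := hyub j
        _ ≤ ((j' / (n:ℤ) : ℤ) : ℝ) := h1
        _ ≤ y j' := hylb j'
  have hyinj : ∀ j j' : ℤ, y j = y j' → j = j' := by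
    intro j j' h
    rcases lt_trichotomy j j' with hc | hc | hc
    · exact absurd h (ne_of_lt (hymono _ _ hc))
    · exact hc
    · exact absurd h.symm (ne_of_lt (hymono _ _ hc))
  have hyadd : ∀ j : ℤ, y (j + n) = y j + 1 := by
    intro j
    have e0 : j + (n:ℤ) = j + n * 1 := by ring
    rw [hyval, hyval, e0, Int.add_mul_emod_self_left, Int.add_mul_ediv_left j 1 hnz]
    push_cast
    ring
  have hyfract : ∀ j : ℤ, Int.fract (y j) = x ((j % (n:ℤ)).toNat) := by
    intro j
    rw [hyval, Int.fract_add_intCast, hfract _ (hres j)]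
  have hGfract : ∀ j : ℤ, Int.fract (G (y j)) = Int.fract (3 * x ((j % (n:ℤ)).toNat)) := by
    intro j
    have h1 : G (y j) = G (x ((j % (n:ℤ)).toNat)) + ((j / (n:ℤ) : ℤ) : ℝ) := by
      rw [hyval]; exact G.map_add_int _ _
    rw [h1, Int.fract_add_intCast, hkey2 _ (hres j)]
  have hNex : ∀ j : ℤ, ∃ j' : ℤ, G (y j) = y j' := by
    intro j
    obtain ⟨j0, hj0n, hj0⟩ := hkey1 ((j % (n:ℤ)).toNat) (hres j)
    refine ⟨(j0:ℤ) + n * ⌊G (y j)⌋, ?_⟩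
    have e1 : ((j0:ℤ) + (n:ℤ) * ⌊G (y j)⌋) % n = j0 := by
      rw [Int.add_mul_emod_self_left]
      exact Int.emod_eq_of_lt (by positivity) (by exact_mod_cast hj0n)
    have e2 : ((j0:ℤ) + (n:ℤ) * ⌊G (y j)⌋) / n = ⌊G (y j)⌋ := by
      rw [Int.add_mul_ediv_left _ _ hnz, Int.ediv_eq_zero_of_lt (by positivity) (by exact_mod_cast hj0n), zero_add]
    have h3 : y ((j0:ℤ) + n * ⌊G (y j)⌋) = x j0 + (⌊G (y j)⌋ : ℝ) := by
      rw [hyval, e1, e2]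
      simp
    rw [h3]
    have h4 : Int.fract (G (y j)) = x j0 := by rw [hGfract j, ← hj0]
    have h5 : G (y j) = (⌊G (y j)⌋ : ℝ) + Int.fract (G (y j)) := by rw [Int.fract]; ring
    rw [h4] at h5
    linarith
  set N : ℤ → ℤ := fun j => Classical.choose (hNex j) with hNdef
  have hN : ∀ j : ℤ, G (y j) = y (N j) := fun j => Classical.choose_spec (hNex j)
  have hNadd : ∀ j : ℤ, N (j + n) = N j + n := by
    intro j
    apply hyinj
    rw [← hN, hyadd j, G.map_add_one, hN, hyadd]
  have hNsub : ∀ j : ℤ, N (j - n) = N j - n := by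
    intro j
    have := hNadd (j - n)
    rw [sub_add_cancel] at this
    omega
  have hNmono : ∀ j j' : ℤ, j ≤ j' → N j ≤ N j' := by
    intro j j' h
    rcases eq_or_lt_of_le h with h1 | h1
    · rw [h1]
    · have h2 : y (N j) ≤ y (N j') := by
        rw [← hN, ← hN]
        exact G.monotone (le_of_lt (hymono _ _ h1))
      by_contra hc
      push_neg at hc
      exact absurd h2 (not_le.mpr (hymono _ _ hc))
  have hNaddk : ∀ (k : ℤ) (j : ℤ), N (j + n * k) = N j + n * k := by
    intro k
    induction k using Int.induction_on with
    | zero => intro j; simp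
    | succ m ih =>
        intro j
        have e : j + (n:ℤ) * ((m:ℤ) + 1) = (j + n * m) + n := by ring
        rw [e, hNadd, ih]
        ring
    | pred m ih =>
        intro j
        have e : j + (n:ℤ) * (-(m:ℤ) - 1) = (j + n * (-(m:ℤ))) - n := by ring
        rw [e, hNsub, ih]
        ring
  have hNinj : ∀ j j' : ℤ, N j = N j' → j = j' := by
    intro j j' h
    -- same residue
    have h1 : Int.fract (y (N j)) = Int.fract (y (N j')) := by rw [h]
    rw [← hN, ← hN, hGfract, hGfract] at h1
    have h2 := hfractinj _ _ (hres j) (hres j') h1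
    have h3 : j % (n:ℤ) = j' % n := by
      have ha : 0 ≤ j % (n:ℤ) := Int.emod_nonneg j hnz
      have hb : 0 ≤ j' % (n:ℤ) := Int.emod_nonneg j' hnz
      omega
    have h4 : (n:ℤ) ∣ (j' - j) := by
      rw [Int.dvd_iff_emod_eq_zero, Int.sub_emod, h3, sub_self, Int.zero_emod]
    obtain ⟨k, hk⟩ := h4
    have h5 : j' = j + n * k := by omega
    rw [h5, hNaddk k j] at h
    have : (n:ℤ) * k = 0 := by omega
    have : k = 0 := by
      rcases mul_eq_zero.mp this with h | h
      · exact absurd h hnz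
      · exact h
    omega
  have hNstrict : ∀ j j' : ℤ, j < j' → N j < N j' := by
    intro j j' h
    have h1 := hNmono j j' (le_of_lt h)
    rcases eq_or_lt_of_le h1 with h2 | h2
    · exact absurd (hNinj _ _ h2) (ne_of_lt h)
    · exact h2
  have hNge : ∀ (m : ℕ) (j : ℤ), N j + m ≤ N (j + m) := by
    intro m
    induction m with
    | zero => intro j; simp
    | succ k ih =>
        intro j
        have h1 := ih j
        have h2 : N (j + k) < N (j + k + 1) := hNstrict _ _ (by omega)
        have e : j + ((k:ℤ) + 1) = j + k + 1 := by ring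
        push_cast
        rw [e]
        omega
  have hNstep : ∀ j : ℤ, N (j + 1) = N j + 1 := by
    intro j
    have h1 : N j + 1 ≤ N (j + 1) := by
      have := hNstrict j (j+1) (by omega)
      omega
    have h2 : N (j + 1) + ((n - 1 : ℕ) : ℤ) ≤ N (j + 1 + ((n-1 : ℕ):ℤ)) := hNge (n-1) (j+1)
    have e : j + 1 + ((n-1 : ℕ):ℤ) = j + n := by
      have : ((n-1:ℕ):ℤ) = (n:ℤ) - 1 := by omega
      rw [this]; ring
    rw [e, hNadd] at h2
    have e2 : ((n-1:ℕ):ℤ) = (n:ℤ) - 1 := by omega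
    rw [e2] at h2
    omega
  have hNlin : ∀ j : ℤ, N j = j + N 0 := by
    intro j
    induction j using Int.induction_on with
    | zero => simp
    | succ m ih => rw [hNstep, ih]; ring
    | pred m ih =>
        have := hNstep (-(m:ℤ) - 1)
        rw [show -(m:ℤ) - 1 + 1 = -(m:ℤ) by ring, ih] at this
        omega
  set c : ℤ := N 0 with hcdef
  -- iterates
  have hpow : ∀ (m : ℕ) (j : ℤ), (G ^ m) (y j) = y (j + m * c) := by
    intro m
    induction m with
    | zero => intro j; simp
    | succ k ih =>
        intro j
        rw [pow_succ]
        have h1 : (G ^ k * G) (y j) = (G ^ k) (G (y j)) := rfl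
        rw [h1, hN j, hNlin j, ih]
        congr 1
        push_cast
        ring
  have hGn : (G ^ n) (y 0) = y 0 + c := by
    rw [hpow n 0]
    have e1 : (0:ℤ) + (n:ℤ) * c = n * c := by ring
    rw [e1]
    have e2 : ((n:ℤ) * c) % n = 0 := Int.mul_emod_right n c
    have e3 : ((n:ℤ) * c) / n = c := Int.mul_ediv_cancel_left c hnz
    rw [hyval, hyval, e2, e3]
    norm_num
  have hτval : G.translationNumber = (c:ℝ) / n :=
    G.translationNumber_of_map_pow_eq_add_int hGn hn0
  -- extract c ≡ 2p mod n
  have hceq : ∃ k : ℤ, c = 2*p + n * k := by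
    rw [hτval] at hτ
    have fr := fract_eq_of_coe_eq hτ
    have hq0 : ((q:ℝ)) ≠ 0 := by positivity
    have hn0' : ((n:ℝ)) ≠ 0 := by positivity
    set k : ℤ := ⌊(c:ℝ)/n⌋ - ⌊(p:ℝ)/q⌋ with hkdef
    refine ⟨k, ?_⟩
    have h5 : (c:ℝ)/n = (p:ℝ)/q + k := by
      rw [Int.fract, Int.fract] at fr
      rw [hkdef]
      push_cast
      linarith
    have h6 : (c:ℝ) = ((p:ℝ)/q + k) * n := (div_eq_iff hn0').mp h5
    have h7 : ((p:ℝ)/q) * n = 2*p := by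
      have hnn : ((n:ℕ):ℝ) = 2 * q := by rw [hndef]; push_cast; ring
      rw [hnn]
      field_simp
    have h8 : (c:ℝ) = ((2*p + n*k : ℤ) : ℝ) := by
      rw [h6, add_mul, h7]
      push_cast
      ring
    exact_mod_cast h8
  obtain ⟨k, hck⟩ := hceq
  -- final digit relation
  refine ⟨x, hmono, hrange, by rw [hXrepr], ?_⟩
  intro i hi
  have h1 : G (y (i:ℤ)) = y ((i:ℤ) + c) := by rw [hN (i:ℤ), hNlin (i:ℤ)]
  have h2 : Int.fract (G (y (i:ℤ))) = Int.fract (3 * x i) := by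
    rw [hGfract (i:ℤ)]
    congr 2
    have : ((i:ℤ) % (n:ℤ)) = i := Int.emod_eq_of_lt (by positivity) (by exact_mod_cast hi)
    rw [this]
    simp
  have h3 : Int.fract (y ((i:ℤ) + c)) = x ((((i:ℤ) + c) % n).toNat) := hyfract _
  have h4 : (((i:ℤ) + c) % n).toNat = (i + 2*p) % n := by
    have e1 : (i:ℤ) + c = ((i:ℤ) + 2*p) + n * k := by rw [hck]; ring
    have e2 : ((i:ℤ) + c) % n = ((i:ℤ) + 2*p) % n := by rw [e1, Int.add_mul_emod_self_left]
    have e3 : ((i:ℤ) + 2*p) % (n:ℤ) = (((i + 2*p) % n : ℕ) : ℤ) := by push_cast; ring_nf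
    omega
  have h5 : Int.fract (3 * x i) = x ((i + 2*p) % n) := by
    rw [← h2, h1, h3, h4]
  have h6 : 3 * x i = (⌊3 * x i⌋ : ℝ) + Int.fract (3 * x i) := by rw [Int.fract]; ring
  rw [h5] at h6
  exact h6


lemma initseg (n : ℕ) (x : ℕ → ℝ) (hmono : ∀ i j, i < j → j < n → x i < x j) (c : ℝ) :
    ∀ i, i < n → (x i < c ↔ i < ((Finset.range n).filter (fun j => x j < c)).card) := by
  intro i hi
  set S := (Finset.range n).filter (fun j => x j < c) with hS
  constructor
  · intro hxc
    have hsub : Finset.range (i+1) ⊆ S := by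
      intro j hj
      rw [Finset.mem_range] at hj
      rw [hS, Finset.mem_filter, Finset.mem_range]
      refine ⟨by omega, ?_⟩
      rcases Nat.lt_or_ge j i with h | h
      · exact lt_trans (hmono j i h hi) hxc
      · have : j = i := by omega
        rw [this]; exact hxc
    have := Finset.card_le_card hsub
    simpa using this
  · intro hcard
    by_contra hxc
    push_neg at hxc
    have hsub : S ⊆ Finset.range i := by
      intro j hj
      rw [hS, Finset.mem_filter, Finset.mem_range] at hj
      rw [Finset.mem_range]
      by_contra hji
      push_neg at hji
      rcases Nat.lt_or_ge i j with h | h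
      · exact absurd (lt_trans (hmono i j h hj.1) hj.2) (not_lt.mpr hxc)
      · have : j = i := by omega
        rw [this] at hj
        exact absurd hj.2 (not_lt.mpr hxc)
    have := Finset.card_le_card hsub
    simp only [Finset.card_range] at this
    omega

lemma digits_determined (p q : ℕ) (hq : 1 ≤ q) (hpq : p < q) (hp : 1 ≤ p ∨ q = 1)
    (x : ℕ → ℝ) (s : ℕ)
    (hmono : ∀ i j, i < j → j < 2*q → x i < x j)
    (hrange : ∀ i, i < 2*q → x i ∈ Set.Ico (0:ℝ) 1)
    (hdig : ∀ i, i < 2*q → 3 * x i = (⌊3 * x i⌋ : ℝ) + x ((i + 2*p) % (2*q)))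
    (hs : ∀ i, i < 2*q → (x i < 1/2 ↔ i < s)) (hsle : s ≤ 2*q) :
    ∀ i, i < 2*q → ⌊3 * x i⌋ =
      if i < min (2*q - 2*p) s then 0 else if i < max (2*q - 2*p) s then 1 else 2 := by
  set n := 2*q with hn
  have hn0 : 0 < n := by omega
  have hx0 : ∀ i, i < n → (0:ℝ) ≤ 3 * x i := fun i hi => by
    have := (hrange i hi).1; linarith
  have hx3 : ∀ i, i < n → 3 * x i < 3 := fun i hi => by
    have := (hrange i hi).2; linarith
  have hd0 : ∀ i, i < n → (0:ℤ) ≤ ⌊3 * x i⌋ := fun i hi => Int.floor_nonneg.mpr (hx0 i hi)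
  have hd2 : ∀ i, i < n → ⌊3 * x i⌋ ≤ 2 := fun i hi => by
    have : ⌊3 * x i⌋ < 3 := Int.floor_lt.mpr (by exact_mod_cast hx3 i hi)
    omega
  have hdlt0 : ∀ i, i < n → (⌊3 * x i⌋ = 0 ↔ x i < 1/3) := fun i hi => by
    constructor
    · intro h
      have h2 := Int.lt_floor_add_one (3 * x i)
      rw [h] at h2; push_cast at h2; linarith
    · intro h
      have h1 : ⌊3 * x i⌋ < 1 := Int.floor_lt.mpr (by push_cast; linarith)
      have := hd0 i hi; omega
  have hdle1 : ∀ i, i < n → (⌊3 * x i⌋ ≤ 1 ↔ x i < 2/3) := fun i hi => by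
    constructor
    · intro h
      have h2 : (3 : ℝ) * x i < (⌊3 * x i⌋ : ℝ) + 1 := Int.lt_floor_add_one (3 * x i)
      have hc : ((⌊3 * x i⌋:ℤ):ℝ) ≤ 1 := by exact_mod_cast h
      linarith
    · intro h
      have h1 : ⌊3 * x i⌋ < 2 := Int.floor_lt.mpr (by push_cast; linarith)
      omega
  rcases hp with hp1 | hq1
  swap
  · -- q = 1 case
    subst hq1
    have hp0 : p = 0 := by omega
    subst hp0
    have hrel : ∀ i, i < n → 2 * x i = (⌊3 * x i⌋ : ℝ) := fun i hi => by
      have h := hdig i hi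
      have he : (i + 2*0) % (2*1) = i := by omega
      rw [he] at h; linarith
    have hd1 : ∀ i, i < n → ⌊3 * x i⌋ ≤ 1 := fun i hi => by
      have h2 := (hrange i hi).2
      have h3 := hrel i hi
      have h4 : ((⌊3 * x i⌋:ℤ):ℝ) < 2 := by linarith
      have h5 : ⌊3 * x i⌋ < 2 := by exact_mod_cast h4
      omega
    have h01 : x 0 < x 1 := hmono 0 1 (by omega) (by omega)
    have hlt : ⌊3 * x 0⌋ < ⌊3 * x 1⌋ := by
      have e0 := hrel 0 (by omega); have e1 := hrel 1 (by omega)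
      have h4 : (⌊3 * x 0⌋:ℝ) < (⌊3 * x 1⌋:ℝ) := by linarith
      exact_mod_cast h4
    have hx00 : ⌊3 * x 0⌋ = 0 := by
      have := hd0 0 (by omega); have := hd1 1 (by omega); omega
    have hx11 : ⌊3 * x 1⌋ = 1 := by
      have := hd0 0 (by omega); have := hd1 1 (by omega); omega
    have hxv0 : x 0 = 0 := by
      have h5 := hrel 0 (by omega); rw [hx00] at h5; push_cast at h5; linarith
    have hxv1 : x 1 = 1/2 := by
      have h5 := hrel 1 (by omega); rw [hx11] at h5; push_cast at h5; linarith
    have hs1 : s = 1 := by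
      have h0 := (hs 0 (by omega)).mp (by rw [hxv0]; norm_num)
      have h1 : ¬ (1 < s) := by
        intro hcon
        have h6 := (hs 1 (by omega)).mpr hcon
        rw [hxv1] at h6; linarith
      omega
    subst hs1
    intro i hi
    have : i = 0 ∨ i = 1 := by omega
    rcases this with h | h <;> subst h
    · rw [if_pos (by omega)]; exact hx00
    · rw [if_neg (by omega), if_pos (by omega)]; exact hx11
  · -- main case p ≥ 1
    set w := n - 2*p with hw
    have hw1 : 2 ≤ w := by omega
    have hw2 : w ≤ n - 2 := by omega
    set a := ((Finset.range n).filter (fun j => x j < 1/3)).card with ha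
    set b := ((Finset.range n).filter (fun j => x j < 2/3)).card with hb
    have hsa : ∀ i, i < n → (x i < 1/3 ↔ i < a) := initseg n x hmono (1/3)
    have hsb : ∀ i, i < n → (x i < 2/3 ↔ i < b) := initseg n x hmono (2/3)
    have hanb : a ≤ n := le_trans (Finset.card_le_card (Finset.filter_subset _ _)) (by simp)
    have hble : b ≤ n := le_trans (Finset.card_le_card (Finset.filter_subset _ _)) (by simp)
    have hdeq0 : ∀ i, i < n → (⌊3 * x i⌋ = 0 ↔ i < a) := fun i hi =>
      (hdlt0 i hi).trans (hsa i hi)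
    have hdeq1 : ∀ i, i < n → (⌊3 * x i⌋ ≤ 1 ↔ i < b) := fun i hi =>
      (hdle1 i hi).trans (hsb i hi)
    have hab : a ≤ b := by
      by_contra hcon
      push_neg at hcon
      have hbn : b < n := by omega
      have h1 := (hdeq0 b hbn).mpr hcon
      have h2 := (hdeq1 b hbn).mp (by omega)
      omega
    have has : a ≤ s := by
      by_contra hcon
      push_neg at hcon
      have hsn : s < n := by omega
      have h1 := (hsa s hsn).mpr hcon
      have h2 := (hs s hsn).mp (by linarith)
      omega
    have hsb' : s ≤ b := by
      by_contra hcon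
      push_neg at hcon
      have hbn : b < n := by omega
      have h1 := (hs b hbn).mpr (by omega)
      have h2 := (hsb b hbn).mp (by linarith)
      omega
    have hjump : a = w ∨ b = w := by
      have hw1n : w - 1 < n := by omega
      have hwn : w < n := by omega
      have e1 : (w - 1 + 2*p) % n = n - 1 := by
        have he : w - 1 + 2*p = n - 1 := by omega
        rw [he]; exact Nat.mod_eq_of_lt (by omega)
      have e2 : (w + 2*p) % n = 0 := by
        have he : w + 2*p = n := by omega
        rw [he]; exact Nat.mod_self n
      have g1 := hdig (w-1) hw1n
      have g2 := hdig w hwn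
      rw [e1] at g1; rw [e2] at g2
      have hxlt : x (w-1) < x w := hmono (w-1) w (by omega) hwn
      have hx0n : x 0 < x (n-1) := hmono 0 (n-1) (by omega) (by omega)
      have hdd : ⌊3 * x (w-1)⌋ < ⌊3 * x w⌋ := by
        have h4 : (⌊3 * x (w-1)⌋:ℝ) < (⌊3 * x w⌋:ℝ) := by linarith
        exact_mod_cast h4
      rcases Nat.lt_or_ge (w-1) a with hc1 | hc1
      · left
        have h2 : ¬ (w < a) := by
          intro hcon
          have h5 := (hdeq0 w hwn).mpr hcon
          have h6 := (hdeq0 (w-1) hw1n).mpr hc1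
          omega
        omega
      · right
        have hdw1 : ⌊3 * x (w-1)⌋ ≠ 0 := by
          intro hcon
          have := (hdeq0 (w-1) hw1n).mp hcon
          omega
        have h1 : ¬ (w < b) := by
          intro hcon
          have h5 := (hdeq1 w hwn).mpr hcon
          have := hd0 (w-1) hw1n
          omega
        have h2 : w - 1 < b := by
          apply (hdeq1 (w-1) hw1n).mp
          have := hd2 w hwn
          omega
        omega
    have hfinal : a = min w s ∧ b = max w s := by
      rcases hjump with haw | hbw
      · -- a = w ≤ s; show b = s
        have hws : w ≤ s := by omega
        have hbs : b = s := by
          by_contra hcon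
          have hsltb : s < b := by omega
          have hsn : s < n := by omega
          have hds1 : ⌊3 * x s⌋ = 1 := by
            have h2 := (hdeq1 s hsn).mpr hsltb
            have h3 : ⌊3 * x s⌋ ≠ 0 := fun hc => by
              have := (hdeq0 s hsn).mp hc; omega
            have := hd0 s hsn
            omega
          have hgs := hdig s hsn
          rw [hds1] at hgs
          have hσn : (s + 2*p) % n < n := Nat.mod_lt _ hn0
          have hxs : ¬ (x s < 1/2) := fun hc => by
            have := (hs s hsn).mp hc; omega
          push_neg at hxs
          have hxσ : ¬ (x ((s + 2*p) % n) < 1/2) := by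
            push_cast at hgs
            intro hc
            have : x s < 1/2 := by linarith
            exact absurd this (not_lt.mpr hxs)
          have hge : ¬ ((s + 2*p) % n < s) := fun hc => hxσ ((hs _ hσn).mpr hc)
          have hmod : (s + 2*p) % n = s + 2*p - n := by
            have h1 : n ≤ s + 2*p := by omega
            rw [Nat.mod_eq_sub_mod h1]
            exact Nat.mod_eq_of_lt (by omega)
          omega
        omega
      · -- b = w ≥ s; show a = s
        have hws : s ≤ w := by omega
        have has' : a = s := by
          by_contra hcon
          have halt : a < s := by omega
          have hin : s - 1 < n := by omega
          have hds1 : ⌊3 * x (s-1)⌋ = 1 := by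
            have h2 := (hdeq1 (s-1) hin).mpr (by omega)
            have h3 : ⌊3 * x (s-1)⌋ ≠ 0 := fun hc => by
              have := (hdeq0 (s-1) hin).mp hc; omega
            have := hd0 (s-1) hin
            omega
          have hgs := hdig (s-1) hin
          rw [hds1] at hgs
          have hσn : (s - 1 + 2*p) % n < n := Nat.mod_lt _ hn0
          have hxs : x (s-1) < 1/2 := (hs (s-1) hin).mpr (by omega)
          have hxσ : x ((s - 1 + 2*p) % n) < 1/2 := by
            push_cast at hgs
            linarith
          have hlt' := (hs _ hσn).mp hxσ
          have hmod : (s - 1 + 2*p) % n = s - 1 + 2*p := by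
            exact Nat.mod_eq_of_lt (by omega)
          omega
        omega
    -- conclude the digit formula
    intro i hi
    obtain ⟨hamin, hbmax⟩ := hfinal
    rw [← hamin, ← hbmax]
    by_cases h1 : i < a
    · rw [if_pos h1]
      exact (hdeq0 i hi).mpr h1
    · rw [if_neg h1]
      by_cases h2 : i < b
      · rw [if_pos h2]
        have h3 := (hdeq1 i hi).mpr h2
        have h4 : ⌊3 * x i⌋ ≠ 0 := fun hc => h1 ((hdeq0 i hi).mp hc)
        have := hd0 i hi
        omega
      · rw [if_neg h2]
        have h3 : ¬ (⌊3 * x i⌋ ≤ 1) := fun hc => h2 ((hdeq1 i hi).mp hc)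
        have := hd2 i hi
        omega


-- s1 count lemma + main theorem (to be appended, test with defs from st1)
lemma s1_count (n : ℕ) (hn0 : 0 < n) (X : Set Circle1) (x : ℕ → ℝ)
    (hmono : ∀ i j, i < j → j < n → x i < x j)
    (hrange : ∀ i, i < n → x i ∈ Set.Ico (0:ℝ) 1)
    (hXrepr : X = {t : Circle1 | ∃ i, i < n ∧ t = ((x i : ℝ) : Circle1)}) :
    ({t ∈ X | ((AddCircle.equivIco 1 0 t : ℝ) < 1 / 2)}).ncard
      = ((Finset.range n).filter (fun i => x i < 1/2)).card := by
  have hcoeinj : ∀ i j, i < n → j < n → ((x i : ℝ) : Circle1) = ((x j : ℝ) : Circle1) → i = j := by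
    intro i j hi hj h
    have h01 : (0:ℝ) + 1 = 1 := by ring
    rw [AddCircle.coe_eq_coe_iff_of_mem_Ico (a := 0) (by rw [h01]; exact hrange i hi)
      (by rw [h01]; exact hrange j hj)] at h
    rcases lt_trichotomy i j with hc | hc | hc
    · exact absurd h (ne_of_lt (hmono i j hc hj))
    · exact hc
    · exact absurd h.symm (ne_of_lt (hmono j i hc hi))
  have hfr : ∀ i, i < n → ((AddCircle.equivIco 1 0 (((x i : ℝ) : Circle1)) : ℝ)) = x i := by
    intro i hi
    rw [equivIco_coe]
    exact Int.fract_eq_self.mpr ⟨(hrange i hi).1, (hrange i hi).2⟩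
  have hseteq : {t ∈ X | ((AddCircle.equivIco 1 0 t : ℝ) < 1 / 2)}
      = (((Finset.range n).filter (fun i => x i < 1/2)).image
          (fun i => ((x i : ℝ) : Circle1)) : Finset Circle1) := by
    ext t
    simp only [Set.mem_setOf_eq, Finset.coe_image, Set.mem_image, Finset.mem_coe,
      Finset.mem_filter, Finset.mem_range]
    constructor
    · rintro ⟨htX, hlt⟩
      rw [hXrepr] at htX
      obtain ⟨i, hi, rfl⟩ := htX
      refine ⟨i, ⟨hi, ?_⟩, rfl⟩
      rwa [hfr i hi] at hlt
    · rintro ⟨i, ⟨hi, hxi⟩, rfl⟩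
      constructor
      · rw [hXrepr]; exact ⟨i, hi, rfl⟩
      · rwa [hfr i hi]
  rw [hseteq, Set.ncard_coe_finset]
  apply Finset.card_image_of_injOn
  intro i hi j hj h
  rw [Finset.mem_coe, Finset.mem_filter, Finset.mem_range] at hi hj
  exact hcoeinj i j hi.1 hj.1 h


/-- Goldberg, uniqueness. Two rotation sets for `m_3` with the same
rotation number `p/q`, each the union of two distinct periodic orbits with `2q` elements,
and with the same number of elements in `[0,1/2)`, are equal. -/
theorem goldberg_uniqueness_m3
    (p q : ℕ) (hq : 1 ≤ q) (hpq : p < q) (hcop : Nat.Coprime p q)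
    (X Y : Set Circle1)
    (hX : IsRotationSetWith 3 X ((((p : ℝ) / (q : ℝ)) : ℝ) : Circle1))
    (hY : IsRotationSetWith 3 Y ((((p : ℝ) / (q : ℝ)) : ℝ) : Circle1))
    (hXcyc : ∃ C C' : Set Circle1, IsPeriodicOrbit 3 C ∧ IsPeriodicOrbit 3 C' ∧
      C ≠ C' ∧ X = C ∪ C')
    (hYcyc : ∃ C C' : Set Circle1, IsPeriodicOrbit 3 C ∧ IsPeriodicOrbit 3 C' ∧
      C ≠ C' ∧ Y = C ∪ C')
    (hXcard : X.ncard = 2 * q) (hYcard : Y.ncard = 2 * q)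
    (hs1 : s1 X = s1 Y) :
    X = Y := by
  set n := 2*q with hndef
  have hn0 : 0 < n := by omega
  have hp1 : 1 ≤ p ∨ q = 1 := by
    rcases Nat.eq_zero_or_pos p with hp0 | hp0
    · right
      subst hp0
      have := hcop
      rw [Nat.coprime_zero_left] at this
      exact this
    · left; exact hp0
  obtain ⟨x, hxmono, hxrange, hXrepr, hxdig⟩ := stage1 p q hq hpq X hX hXcard
  obtain ⟨y, hymono, hyrange, hYrepr, hydig⟩ := stage1 p q hq hpq Y hY hYcard
  set sX := ((Finset.range n).filter (fun i => x i < 1/2)).card with hsXdef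
  set sY := ((Finset.range n).filter (fun i => y i < 1/2)).card with hsYdef
  have hs1X : s1 X = sX := s1_count n hn0 X x hxmono hxrange hXrepr
  have hs1Y : s1 Y = sY := s1_count n hn0 Y y hymono hyrange hYrepr
  have hsXY : sX = sY := by rw [← hs1X, ← hs1Y, hs1]
  have hsXn : sX ≤ n := le_trans (Finset.card_le_card (Finset.filter_subset _ _)) (by simp)
  have hsx : ∀ i, i < n → (x i < 1/2 ↔ i < sX) := initseg n x hxmono (1/2)
  have hsy : ∀ i, i < n → (y i < 1/2 ↔ i < sX) := by
    rw [hsXY]; exact initseg n y hymono (1/2)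
  have hdx := digits_determined p q hq hpq hp1 x sX hxmono hxrange hxdig hsx hsXn
  have hdy := digits_determined p q hq hpq hp1 y sX hymono hyrange hydig hsy
    (by rw [hsXY]; exact le_trans (Finset.card_le_card (Finset.filter_subset _ _)) (by simp; omega))
  have hdeq : ∀ i, i < n → (⌊3 * x i⌋ : ℤ) = ⌊3 * y i⌋ := by
    intro i hi
    rw [hdx i hi, hdy i hi]
  -- contraction
  obtain ⟨i0, hi0, hmax⟩ := Finset.exists_max_image (Finset.range n)
    (fun i => |x i - y i|) ⟨0, Finset.mem_range.mpr hn0⟩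
  rw [Finset.mem_range] at hi0
  set M := |x i0 - y i0| with hMdef
  have hMnonneg : 0 ≤ M := abs_nonneg _
  have hcontr : ∀ i, i < n → |x i - y i| ≤ M / 3 := by
    intro i hi
    have hσ : (i + 2*p) % n < n := Nat.mod_lt _ hn0
    have h1 := hxdig i hi
    have h2 := hydig i hi
    have h3 : (⌊3 * x i⌋ : ℝ) = (⌊3 * y i⌋ : ℝ) := by exact_mod_cast hdeq i hi
    have h4 : 3 * (x i - y i) = x ((i + 2*p) % n) - y ((i + 2*p) % n) := by
      rw [mul_sub, h1, h2, h3]; ring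
    have h5 : |x ((i + 2*p) % n) - y ((i + 2*p) % n)| ≤ M := by
      have := hmax _ (Finset.mem_range.mpr hσ)
      simpa using this
    have h6 : |3 * (x i - y i)| ≤ M := by rw [h4]; exact h5
    rw [abs_mul] at h6
    have : |(3:ℝ)| = 3 := by norm_num
    rw [this] at h6
    linarith
  have hM0 : M = 0 := by
    have := hcontr i0 hi0
    rw [← hMdef] at this
    linarith
  have hxyeq : ∀ i, i < n → x i = y i := by
    intro i hi
    have h1 := hcontr i hi
    rw [hM0] at h1
    have h2 : |x i - y i| ≤ 0 := by linarith
    have := abs_nonneg (x i - y i)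
    have : |x i - y i| = 0 := le_antisymm h2 this
    have := abs_eq_zero.mp this
    linarith
  rw [hXrepr, hYrepr]
  ext t
  simp only [Set.mem_setOf_eq]
  constructor
  · rintro ⟨i, hi, rfl⟩
    exact ⟨i, hi, by rw [hxyeq i hi]⟩
  · rintro ⟨i, hi, rfl⟩
    exact ⟨i, hi, by rw [hxyeq i hi]⟩
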